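/- Let (Ω, F, μ) be a probability space with a filtration (F_n)_{n ≥ 1}, and let (ξ_n)_{n=1}^{N} be a finite adapted sequence of functions in L^2(μ). Then E[(∑_{n=1}^{N} (E[ξ_n | F_{n-1}])^2)^(1/2)] ≤ 2√2 · E[(∑_{n=1}^{N} ξ_n^2)^(1/2)], where F_0 = F_1. -/

import Mathlib

open MeasureTheory Finset

section Aux

lemma LY_sqrt_le_one_add {x : ℝ} (hx : 0 ≤ x) : Real.sqrt x ≤ 1 + x := by
  nlinarith [Real.sq_sqrt hx, Real.sqrt_nonneg x]

lemma LY_sqrt_sum_sq_le_sum_abs {ι : Type*} (s : Finset ι) (f : ι → ℝ) :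
    Real.sqrt (∑ i ∈ s, f i ^ 2) ≤ ∑ i ∈ s, |f i| := by
  have h : (∑ i ∈ s, f i ^ 2) ≤ (∑ i ∈ s, |f i|) ^ 2 := by
    calc ∑ i ∈ s, f i ^ 2 = ∑ i ∈ s, |f i| * |f i| := by
          refine Finset.sum_congr rfl fun i _ => ?_
          rw [abs_mul_abs_self]; ring
      _ ≤ ∑ i ∈ s, |f i| * (∑ j ∈ s, |f j|) := by
          refine Finset.sum_le_sum fun i hi => ?_
          exact mul_le_mul_of_nonneg_left
            (Finset.single_le_sum (fun j _ => abs_nonneg (f j)) hi) (abs_nonneg _)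
      _ = (∑ i ∈ s, |f i|) ^ 2 := by rw [← Finset.sum_mul]; ring
  calc Real.sqrt (∑ i ∈ s, f i ^ 2) ≤ Real.sqrt ((∑ i ∈ s, |f i|) ^ 2) := Real.sqrt_le_sqrt h
    _ = ∑ i ∈ s, |f i| := Real.sqrt_sq (Finset.sum_nonneg fun i _ => abs_nonneg _)

lemma LY_sqrt_sum_sq_add {ι : Type*} (s : Finset ι) (a b : ι → ℝ) :
    Real.sqrt (∑ i ∈ s, (a i + b i) ^ 2)
      ≤ Real.sqrt (∑ i ∈ s, a i ^ 2) + Real.sqrt (∑ i ∈ s, b i ^ 2) := by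
  have hA := Real.sqrt_nonneg (∑ i ∈ s, a i ^ 2)
  have hB := Real.sqrt_nonneg (∑ i ∈ s, b i ^ 2)
  have hA2 : Real.sqrt (∑ i ∈ s, a i ^ 2) ^ 2 = ∑ i ∈ s, a i ^ 2 :=
    Real.sq_sqrt (Finset.sum_nonneg fun i _ => sq_nonneg _)
  have hB2 : Real.sqrt (∑ i ∈ s, b i ^ 2) ^ 2 = ∑ i ∈ s, b i ^ 2 :=
    Real.sq_sqrt (Finset.sum_nonneg fun i _ => sq_nonneg _)
  have hab : (∑ i ∈ s, a i * b i)
      ≤ Real.sqrt (∑ i ∈ s, a i ^ 2) * Real.sqrt (∑ i ∈ s, b i ^ 2) := by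
    have h := Finset.sum_mul_sq_le_sq_mul_sq s a b
    have h1 : (∑ i ∈ s, a i * b i) ≤ |∑ i ∈ s, a i * b i| := le_abs_self _
    have h2 : |∑ i ∈ s, a i * b i| = Real.sqrt ((∑ i ∈ s, a i * b i) ^ 2) :=
      (Real.sqrt_sq_eq_abs _).symm
    rw [h2] at h1
    refine h1.trans ?_
    rw [← Real.sqrt_mul (Finset.sum_nonneg fun i _ => sq_nonneg _)]
    exact Real.sqrt_le_sqrt h
  have hexp : ∑ i ∈ s, (a i + b i) ^ 2
      = (∑ i ∈ s, a i ^ 2) + 2 * (∑ i ∈ s, a i * b i) + (∑ i ∈ s, b i ^ 2) := by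
    rw [Finset.mul_sum, ← Finset.sum_add_distrib, ← Finset.sum_add_distrib]
    exact Finset.sum_congr rfl fun i _ => by ring
  have hsq : ∑ i ∈ s, (a i + b i) ^ 2
      ≤ (Real.sqrt (∑ i ∈ s, a i ^ 2) + Real.sqrt (∑ i ∈ s, b i ^ 2)) ^ 2 := by
    rw [hexp]; nlinarith [hab]
  calc Real.sqrt (∑ i ∈ s, (a i + b i) ^ 2)
      ≤ Real.sqrt ((Real.sqrt (∑ i ∈ s, a i ^ 2) + Real.sqrt (∑ i ∈ s, b i ^ 2)) ^ 2) :=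
        Real.sqrt_le_sqrt hsq
    _ = _ := Real.sqrt_sq (by positivity)

lemma LY_sq_condExp_le {Ω : Type*} {m0 : MeasurableSpace Ω} {μ : Measure Ω}
    [IsProbabilityMeasure μ] {m : MeasurableSpace Ω} (hm : m ≤ m0)
    {f : Ω → ℝ} (hf : MemLp f 2 μ) :
    (fun ω => (μ[f|m]) ω ^ 2) ≤ᵐ[μ] μ[fun ω => f ω ^ 2|m] := by
  haveI : SigmaFinite (μ.trim hm) := inferInstance
  have hfi : Integrable f μ := hf.integrable one_le_two
  have hf2 : Integrable (fun ω => f ω ^ 2) μ := hf.integrable_sq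
  have key : ∀ t : ℚ, ∀ᵐ ω ∂μ,
      0 ≤ (μ[fun ω => f ω ^ 2|m]) ω - 2 * (t : ℝ) * (μ[f|m]) ω + (t : ℝ) ^ 2 := by
    intro t
    have h0 : (0 : Ω → ℝ) ≤ᵐ[μ] μ[fun ω => (f ω - (t : ℝ)) ^ 2|m] :=
      condExp_nonneg (Filter.Eventually.of_forall fun ω => sq_nonneg _)
    have hrw : (fun ω => (f ω - (t : ℝ)) ^ 2)
        = ((fun ω => f ω ^ 2) - (2 * (t : ℝ)) • f) + fun _ => (t : ℝ) ^ 2 := by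
      funext ω
      simp only [Pi.add_apply, Pi.sub_apply, Pi.smul_apply, smul_eq_mul]
      ring
    have e1 : μ[fun ω => (f ω - (t : ℝ)) ^ 2|m]
        =ᵐ[μ] μ[(fun ω => f ω ^ 2) - (2 * (t : ℝ)) • f|m] + μ[(fun _ => (t : ℝ) ^ 2)|m] := by
      rw [hrw]
      exact condExp_add (hf2.sub (hfi.smul (2 * (t : ℝ)))) (integrable_const _) m
    have e2 : μ[(fun ω => f ω ^ 2) - (2 * (t : ℝ)) • f|m]
        =ᵐ[μ] μ[fun ω => f ω ^ 2|m] - μ[(2 * (t : ℝ)) • f|m] :=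
      condExp_sub hf2 (hfi.smul _) m
    have e3 : μ[(2 * (t : ℝ)) • f|m] =ᵐ[μ] (2 * (t : ℝ)) • μ[f|m] := condExp_smul _ _ m
    have e4 : μ[(fun _ : Ω => (t : ℝ) ^ 2)|m] = fun _ => (t : ℝ) ^ 2 := condExp_const hm _
    filter_upwards [h0, e1, e2, e3] with ω h0ω h1ω h2ω h3ω
    rw [h1ω, e4] at h0ω
    simp only [Pi.add_apply, Pi.sub_apply, Pi.smul_apply, smul_eq_mul, Pi.zero_apply] at h0ω h2ω h3ω
    rw [h2ω, h3ω] at h0ω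
    linarith
  have hae : ∀ᵐ ω ∂μ, ∀ t : ℚ,
      0 ≤ (μ[fun ω => f ω ^ 2|m]) ω - 2 * (t : ℝ) * (μ[f|m]) ω + (t : ℝ) ^ 2 :=
    ae_all_iff.mpr key
  filter_upwards [hae] with ω hω
  by_contra hcon
  push_neg at hcon
  set g := (μ[f|m]) ω with hg
  set M := (μ[fun ω => f ω ^ 2|m]) ω with hM
  have hpos : 0 < g ^ 2 - M := by linarith
  have hs : 0 < Real.sqrt (g ^ 2 - M) := Real.sqrt_pos.mpr hpos
  obtain ⟨t, ht⟩ := exists_rat_near g hs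
  have h1 := hω t
  have habs := abs_lt.mp ht
  have hsq : (g - (t : ℝ)) ^ 2 < g ^ 2 - M := by
    nlinarith [Real.sq_sqrt hpos.le, Real.sqrt_nonneg (g ^ 2 - M)]
  nlinarith [h1, hsq]

end Aux

theorem stmt_6 {Ω : Type*} [m0 : MeasurableSpace Ω] (μ : Measure Ω)
    [IsProbabilityMeasure μ]
    (F : ℕ → MeasurableSpace Ω) (hmono : Monotone F) (hle : ∀ n, F n ≤ m0)
    (hF0 : F 0 = F 1)
    (N : ℕ) (ξ : ℕ → Ω → ℝ)
    (hadp : ∀ n ∈ Finset.Icc 1 N, StronglyMeasurable[F n] (ξ n))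
    (hL2 : ∀ n ∈ Finset.Icc 1 N, MemLp (ξ n) 2 μ) :
    ∫ ω, Real.sqrt (∑ n ∈ Finset.Icc 1 N, (μ[ξ n|F (n - 1)]) ω ^ 2) ∂μ
      ≤ 2 * Real.sqrt 2 * ∫ ω, Real.sqrt (∑ n ∈ Finset.Icc 1 N, ξ n ω ^ 2) ∂μ := by
  classical
  set S : ℕ → Ω → ℝ := fun n ω => Real.sqrt (∑ k ∈ Finset.Icc 1 n, ξ k ω ^ 2) with hSdef
  set φ : ℕ → Ω → ℝ := fun n ω => ξ n ω * (S (n - 1) ω / S n ω) with hφdef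
  set ψ : ℕ → Ω → ℝ := fun n ω => ξ n ω - φ n ω with hψdef
  set c : ℕ → Ω → ℝ := fun n => μ[fun ω => S n ω - S (n - 1) ω|F (n - 1)] with hcdef
  set A : Ω → ℝ := fun ω => ∑ n ∈ Finset.Icc 1 N, c n ω with hAdef
  -- basic pointwise facts
  have hS_nonneg : ∀ n ω, 0 ≤ S n ω := fun n ω => Real.sqrt_nonneg _
  have hsum_nonneg : ∀ n ω, (0:ℝ) ≤ ∑ k ∈ Finset.Icc 1 n, ξ k ω ^ 2 :=
    fun n ω => Finset.sum_nonneg fun k _ => sq_nonneg _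
  have hS_sq : ∀ n ω, S n ω ^ 2 = ∑ k ∈ Finset.Icc 1 n, ξ k ω ^ 2 :=
    fun n ω => Real.sq_sqrt (hsum_nonneg n ω)
  have hS_mono : ∀ a b, a ≤ b → ∀ ω, S a ω ≤ S b ω := by
    intro a b hab ω
    apply Real.sqrt_le_sqrt
    exact Finset.sum_le_sum_of_subset_of_nonneg
      (Finset.Icc_subset_Icc_right hab) (fun k _ _ => sq_nonneg _)
  have hS_sq_succ : ∀ n, 1 ≤ n → ∀ ω, S n ω ^ 2 = S (n - 1) ω ^ 2 + ξ n ω ^ 2 := by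
    intro n hn ω
    obtain ⟨m, rfl⟩ : ∃ m, n = m + 1 := ⟨n - 1, (Nat.succ_pred_eq_of_pos hn).symm⟩
    rw [hS_sq, hS_sq]
    simp only [Nat.add_sub_cancel]
    rw [Finset.sum_Icc_succ_top (Nat.one_le_iff_ne_zero.mpr (Nat.succ_ne_zero m))]
  have hxi_le : ∀ n, 1 ≤ n → ∀ ω, |ξ n ω| ≤ S n ω := by
    intro n hn ω
    rw [← Real.sqrt_sq_eq_abs]
    apply Real.sqrt_le_sqrt
    exact Finset.single_le_sum (f := fun k => ξ k ω ^ 2) (fun k _ => sq_nonneg _)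
      (Finset.mem_Icc.mpr ⟨hn, le_rfl⟩)
  have hratio_nonneg : ∀ n ω, 0 ≤ S (n - 1) ω / S n ω :=
    fun n ω => div_nonneg (hS_nonneg _ _) (hS_nonneg _ _)
  have hratio_le_one : ∀ n ω, S (n - 1) ω / S n ω ≤ 1 :=
    fun n ω => div_le_one_of_le₀ (hS_mono _ _ (Nat.sub_le n 1) ω) (hS_nonneg _ _)
  have hφ_abs : ∀ n ω, |φ n ω| ≤ |ξ n ω| := by
    intro n ω
    rw [hφdef]
    simp only
    rw [abs_mul]
    calc |ξ n ω| * |S (n - 1) ω / S n ω| ≤ |ξ n ω| * 1 := by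
          apply mul_le_mul_of_nonneg_left _ (abs_nonneg _)
          rw [abs_of_nonneg (hratio_nonneg n ω)]
          exact hratio_le_one n ω
      _ = |ξ n ω| := mul_one _
  have hψ_abs : ∀ n, 1 ≤ n → ∀ ω, |ψ n ω| ≤ S n ω - S (n - 1) ω := by
    intro n hn ω
    have hmono' := hS_mono (n - 1) n (Nat.sub_le n 1) ω
    rcases eq_or_lt_of_le (hS_nonneg n ω) with h0 | hpos
    · have hξ0 : ξ n ω = 0 := by
        have := hxi_le n hn ω
        rw [← h0] at this
        exact abs_eq_zero.mp (le_antisymm this (abs_nonneg _))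
      have hφ0 : φ n ω = 0 := by
        have := hφ_abs n ω
        rw [hξ0, abs_zero] at this
        exact abs_eq_zero.mp (le_antisymm this (abs_nonneg _))
      rw [hψdef]; simp only [hξ0, hφ0, sub_zero, abs_zero]
      have h1 : S (n-1) ω ≤ 0 := le_of_le_of_eq hmono' h0.symm
      have h2 := hS_nonneg (n-1) ω
      linarith
    · set r := S (n - 1) ω / S n ω with hr
      have hrS : S n ω * r = S (n - 1) ω := mul_div_cancel₀ _ (ne_of_gt hpos)
      have hψ_eq : ψ n ω = ξ n ω * (1 - r) := by rw [hψdef, hφdef]; simp only; ring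
      rw [hψ_eq, abs_mul, abs_of_nonneg (by linarith [hratio_le_one n ω] : (0:ℝ) ≤ 1 - r)]
      have := hxi_le n hn ω
      nlinarith [hratio_le_one n ω, hratio_nonneg n ω, abs_nonneg (ξ n ω)]
  have hφ_sq : ∀ n, 1 ≤ n → ∀ ω,
      φ n ω ^ 2 ≤ (2 * S (n - 1) ω) * (S n ω - S (n - 1) ω) := by
    intro n hn ω
    have hmono' := hS_mono (n - 1) n (Nat.sub_le n 1) ω
    have ha := hS_nonneg (n - 1) ω
    rcases eq_or_lt_of_le (hS_nonneg n ω) with h0 | hpos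
    · have hξ0 : ξ n ω = 0 := by
        have := hxi_le n hn ω
        rw [← h0] at this
        exact abs_eq_zero.mp (le_antisymm this (abs_nonneg _))
      have hφ0 : φ n ω = 0 := by
        have := hφ_abs n ω
        rw [hξ0, abs_zero] at this
        exact abs_eq_zero.mp (le_antisymm this (abs_nonneg _))
      rw [hφ0]
      have h1 : S (n-1) ω ≤ 0 := le_of_le_of_eq hmono' h0.symm
      nlinarith
    · have hx2 : ξ n ω ^ 2 = S n ω ^ 2 - S (n - 1) ω ^ 2 := by
        have := hS_sq_succ n hn ω; linarith
      have hφeq : φ n ω ^ 2 = ξ n ω ^ 2 * (S (n - 1) ω / S n ω) ^ 2 := by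
        rw [hφdef]; simp only; ring
      have hrw2 : (S n ω ^ 2 - S (n - 1) ω ^ 2) * (S (n - 1) ω / S n ω) ^ 2
          = ((S n ω ^ 2 - S (n - 1) ω ^ 2) * S (n - 1) ω ^ 2) / S n ω ^ 2 := by
        rw [div_pow]; ring
      rw [hφeq, hx2, hrw2, div_le_iff₀ (by positivity : (0:ℝ) < S n ω ^ 2)]
      nlinarith [mul_nonneg ha (sub_nonneg.mpr hmono'), sq_nonneg (S n ω - S (n-1) ω),
        mul_nonneg (mul_nonneg ha ha) (sub_nonneg.mpr hmono'),
        mul_nonneg (mul_nonneg (sub_nonneg.mpr hmono') ha) (sub_nonneg.mpr hpos.le)]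
    -- measurability
  have hmeasξ : ∀ n, n ∈ Finset.Icc 1 N → StronglyMeasurable[m0] (ξ n) :=
    fun n hn => (hadp n hn).mono (hle n)
  have hmeasS : ∀ n, n ≤ N → StronglyMeasurable[F n] (S n) := by
    intro n hn
    rw [hSdef]
    apply Continuous.comp_stronglyMeasurable Real.continuous_sqrt
    apply Finset.stronglyMeasurable_fun_sum
    intro k hk
    rw [Finset.mem_Icc] at hk
    have h1 : StronglyMeasurable[F n] (ξ k) :=
      (hadp k (Finset.mem_Icc.mpr ⟨hk.1, hk.2.trans hn⟩)).mono (hmono hk.2)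
    exact h1.pow 2
  have hmeasS0 : ∀ n, n ≤ N → StronglyMeasurable[m0] (S n) :=
    fun n hn => (hmeasS n hn).mono (hle n)
  have hmeasφ : ∀ n, n ∈ Finset.Icc 1 N → StronglyMeasurable[m0] (φ n) := by
    intro n hn
    rw [Finset.mem_Icc] at hn
    rw [hφdef]
    exact ((hmeasξ n (Finset.mem_Icc.mpr hn)).measurable.mul
      (((hmeasS0 (n-1) ((Nat.sub_le n 1).trans hn.2)).measurable).div
        ((hmeasS0 n hn.2).measurable))).stronglyMeasurable
  have hmeasψ : ∀ n, n ∈ Finset.Icc 1 N → StronglyMeasurable[m0] (ψ n) := by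
    intro n hn
    rw [hψdef]
    exact (hmeasξ n hn).sub (hmeasφ n hn)
  -- integrability
  have hint_sum : ∀ n, n ≤ N → Integrable (fun ω => ∑ k ∈ Finset.Icc 1 n, ξ k ω ^ 2) μ := by
    intro n hn
    apply integrable_finset_sum
    intro k hk
    rw [Finset.mem_Icc] at hk
    exact (hL2 k (Finset.mem_Icc.mpr ⟨hk.1, hk.2.trans hn⟩)).integrable_sq
  have hint_S : ∀ n, n ≤ N → Integrable (S n) μ := by
    intro n hn
    apply Integrable.mono' ((integrable_const (1:ℝ)).add (hint_sum n hn))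
      (hmeasS0 n hn).aestronglyMeasurable
    apply Filter.Eventually.of_forall
    intro ω
    rw [Real.norm_eq_abs, abs_of_nonneg (hS_nonneg n ω)]
    exact LY_sqrt_le_one_add (hsum_nonneg n ω)
  have hL2_φ : ∀ n, n ∈ Finset.Icc 1 N → MemLp (φ n) 2 μ := by
    intro n hn
    apply MemLp.of_le (hL2 n hn) (hmeasφ n hn).aestronglyMeasurable
    apply Filter.Eventually.of_forall
    intro ω
    rw [Real.norm_eq_abs, Real.norm_eq_abs]
    exact hφ_abs n ω
  have hint_φ : ∀ n, n ∈ Finset.Icc 1 N → Integrable (φ n) μ :=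
    fun n hn => (hL2_φ n hn).integrable one_le_two
  have hint_ψ : ∀ n, n ∈ Finset.Icc 1 N → Integrable (ψ n) μ := by
    intro n hn
    rw [hψdef]
    exact ((hL2 n hn).integrable one_le_two).sub (hint_φ n hn)
  have hint_φsq : ∀ n, n ∈ Finset.Icc 1 N → Integrable (fun ω => φ n ω ^ 2) μ :=
    fun n hn => (hL2_φ n hn).integrable_sq
  have hint_ΔS : ∀ n, n ∈ Finset.Icc 1 N → Integrable (fun ω => S n ω - S (n - 1) ω) μ := by
    intro n hn
    rw [Finset.mem_Icc] at hn
    exact (hint_S n hn.2).sub (hint_S (n-1) ((Nat.sub_le n 1).trans hn.2))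
  have hint_SΔ : ∀ n, n ∈ Finset.Icc 1 N →
      Integrable ((fun ω => 2 * S (n - 1) ω) * (fun ω => S n ω - S (n - 1) ω)) μ := by
    intro n hn
    rw [Finset.mem_Icc] at hn
    have hb : ∀ ω, ‖(2 * S (n - 1) ω) * (S n ω - S (n - 1) ω)‖
        ≤ 1 + 2 * ∑ k ∈ Finset.Icc 1 n, ξ k ω ^ 2 := by
      intro ω
      have h1 := hS_mono (n-1) n (Nat.sub_le n 1) ω
      have h2 := hS_nonneg (n-1) ω
      have h3 := hS_nonneg n ω
      have h4 : (2 * S (n - 1) ω) * (S n ω - S (n - 1) ω) ≤ 2 * S n ω ^ 2 := by nlinarith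
      have h5 : (0:ℝ) ≤ (2 * S (n - 1) ω) * (S n ω - S (n - 1) ω) := by nlinarith
      rw [Real.norm_eq_abs, abs_of_nonneg h5]
      have h7 := hS_sq n ω
      nlinarith [h4, h7, hsum_nonneg n ω]
    apply Integrable.mono' ((integrable_const (1:ℝ)).add ((hint_sum n hn.2).const_mul 2))
    · exact ((stronglyMeasurable_const.mul (hmeasS0 (n-1) ((Nat.sub_le n 1).trans hn.2))).mul
        ((hmeasS0 n hn.2).sub (hmeasS0 (n-1) ((Nat.sub_le n 1).trans hn.2)))).aestronglyMeasurable
    · exact Filter.Eventually.of_forall hb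
  have hint_c : ∀ n, Integrable (c n) μ := by
    intro n
    rw [hcdef]
    exact integrable_condExp
  have hint_A : Integrable A μ := by
    rw [hAdef]
    exact integrable_finset_sum _ fun n _ => hint_c n
    -- conditional expectation facts, for each n
  have hfacts : ∀ n, n ∈ Finset.Icc 1 N → (∀ᵐ ω ∂μ,
      |(μ[ψ n|F (n - 1)]) ω| ≤ c n ω ∧
      (μ[φ n|F (n - 1)]) ω ^ 2 ≤ (μ[fun ω' => φ n ω' ^ 2|F (n - 1)]) ω ∧
      (μ[fun ω' => φ n ω' ^ 2|F (n - 1)]) ω ≤ 2 * S (n - 1) ω * c n ω ∧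
      (μ[ξ n|F (n - 1)]) ω = (μ[ψ n|F (n - 1)]) ω + (μ[φ n|F (n - 1)]) ω ∧
      0 ≤ c n ω) := by
    intro n hn
    have hn' := Finset.mem_Icc.mp hn
    haveI : SigmaFinite (μ.trim (hle (n - 1))) := inferInstance
    -- (1) |E[ψ]| ≤ c
    have h1a : μ[ψ n|F (n - 1)] ≤ᵐ[μ] c n := by
      rw [hcdef]
      apply condExp_mono (hint_ψ n hn) (hint_ΔS n hn)
      apply Filter.Eventually.of_forall
      intro ω
      exact (le_abs_self _).trans (hψ_abs n hn'.1 ω)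
    have h1b : μ[-ψ n|F (n - 1)] ≤ᵐ[μ] c n := by
      rw [hcdef]
      apply condExp_mono (hint_ψ n hn).neg (hint_ΔS n hn)
      apply Filter.Eventually.of_forall
      intro ω
      simp only [Pi.neg_apply]
      exact (neg_le_abs _).trans (hψ_abs n hn'.1 ω)
    have h1c : μ[-ψ n|F (n - 1)] =ᵐ[μ] -μ[ψ n|F (n - 1)] := condExp_neg _ _
    -- (2) Jensen
    have h2 : (fun ω => (μ[φ n|F (n - 1)]) ω ^ 2) ≤ᵐ[μ] μ[fun ω' => φ n ω' ^ 2|F (n - 1)] :=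
      LY_sq_condExp_le (hle (n - 1)) (hL2_φ n hn)
    -- (3) bound on E[φ²]
    have h3a : μ[fun ω' => φ n ω' ^ 2|F (n - 1)]
        ≤ᵐ[μ] μ[(fun ω => 2 * S (n - 1) ω) * (fun ω => S n ω - S (n - 1) ω)|F (n - 1)] := by
      apply condExp_mono (hint_φsq n hn) (hint_SΔ n hn)
      apply Filter.Eventually.of_forall
      intro ω
      exact hφ_sq n hn'.1 ω
    have h3b : μ[(fun ω => 2 * S (n - 1) ω) * (fun ω => S n ω - S (n - 1) ω)|F (n - 1)]
        =ᵐ[μ] (fun ω => 2 * S (n - 1) ω) * μ[fun ω => S n ω - S (n - 1) ω|F (n - 1)] := by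
      apply condExp_mul_of_stronglyMeasurable_left
      · exact stronglyMeasurable_const.mul (hmeasS (n - 1) ((Nat.sub_le n 1).trans hn'.2))
      · exact hint_SΔ n hn
      · exact hint_ΔS n hn
    -- (4) decomposition
    have h4 : μ[ξ n|F (n - 1)] =ᵐ[μ] μ[ψ n|F (n - 1)] + μ[φ n|F (n - 1)] := by
      have hdec : ξ n = ψ n + φ n := by
        funext ω
        rw [hψdef]
        simp only [Pi.add_apply]
        ring
      nth_rewrite 1 [hdec]
      exact condExp_add (hint_ψ n hn) (hint_φ n hn) _
    -- (5) c nonneg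
    have h5 : (0 : Ω → ℝ) ≤ᵐ[μ] c n := by
      rw [hcdef]
      apply condExp_nonneg
      apply Filter.Eventually.of_forall
      intro ω
      exact sub_nonneg.mpr (hS_mono (n - 1) n (Nat.sub_le n 1) ω)
    filter_upwards [h1a, h1b, h1c, h2, h3a, h3b, h4, h5]
      with ω w1a w1b w1c w2 w3a w3b w4 w5
    refine ⟨?_, w2, ?_, w4, w5⟩
    · rw [abs_le]
      constructor
      · rw [Pi.neg_apply] at w1c
        have := w1b
        rw [w1c] at this
        linarith
      · exact w1a
    · refine w3a.trans ?_
      rw [w3b]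
      simp only [Pi.mul_apply]
      rw [hcdef]
    -- combine over n
  have hall : ∀ᵐ ω ∂μ, ∀ n, n ∈ Finset.Icc 1 N → (
      |(μ[ψ n|F (n - 1)]) ω| ≤ c n ω ∧
      (μ[φ n|F (n - 1)]) ω ^ 2 ≤ (μ[fun ω' => φ n ω' ^ 2|F (n - 1)]) ω ∧
      (μ[fun ω' => φ n ω' ^ 2|F (n - 1)]) ω ≤ 2 * S (n - 1) ω * c n ω ∧
      (μ[ξ n|F (n - 1)]) ω = (μ[ψ n|F (n - 1)]) ω + (μ[φ n|F (n - 1)]) ω ∧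
      0 ≤ c n ω) := by
    rw [ae_all_iff]
    intro n
    by_cases hn : n ∈ Finset.Icc 1 N
    · exact (hfacts n hn).mono fun ω h _ => h
    · exact Filter.Eventually.of_forall fun ω h => absurd h hn
  -- master pointwise bound
  have hmaster : (fun ω => Real.sqrt (∑ n ∈ Finset.Icc 1 N, (μ[ξ n|F (n - 1)]) ω ^ 2))
      ≤ᵐ[μ] fun ω => A ω + Real.sqrt 2 * ((S N ω + A ω) / 2) := by
    filter_upwards [hall] with ω hω
    have hc0 : ∀ n ∈ Finset.Icc 1 N, 0 ≤ c n ω := fun n hn => (hω n hn).2.2.2.2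
    have hA0 : 0 ≤ A ω := by rw [hAdef]; exact Finset.sum_nonneg hc0
    have hSN0 : 0 ≤ S N ω := hS_nonneg N ω
    have e0 : ∑ n ∈ Finset.Icc 1 N, (μ[ξ n|F (n - 1)]) ω ^ 2
        = ∑ n ∈ Finset.Icc 1 N, ((μ[ψ n|F (n - 1)]) ω + (μ[φ n|F (n - 1)]) ω) ^ 2 :=
      Finset.sum_congr rfl fun n hn => by rw [(hω n hn).2.2.2.1]
    have step1 : Real.sqrt (∑ n ∈ Finset.Icc 1 N, (μ[ξ n|F (n - 1)]) ω ^ 2)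
        ≤ Real.sqrt (∑ n ∈ Finset.Icc 1 N, (μ[ψ n|F (n - 1)]) ω ^ 2)
          + Real.sqrt (∑ n ∈ Finset.Icc 1 N, (μ[φ n|F (n - 1)]) ω ^ 2) := by
      rw [e0]
      exact LY_sqrt_sum_sq_add _ _ _
    have step2 : Real.sqrt (∑ n ∈ Finset.Icc 1 N, (μ[ψ n|F (n - 1)]) ω ^ 2) ≤ A ω := by
      refine (LY_sqrt_sum_sq_le_sum_abs _ _).trans ?_
      rw [hAdef]
      exact Finset.sum_le_sum fun n hn => (hω n hn).1
    have h3 : ∑ n ∈ Finset.Icc 1 N, (μ[φ n|F (n - 1)]) ω ^ 2 ≤ 2 * S N ω * A ω := by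
      calc ∑ n ∈ Finset.Icc 1 N, (μ[φ n|F (n - 1)]) ω ^ 2
          ≤ ∑ n ∈ Finset.Icc 1 N, 2 * S N ω * c n ω := by
            refine Finset.sum_le_sum fun n hn => ?_
            refine ((hω n hn).2.1.trans ((hω n hn).2.2.1)).trans ?_
            have hSle : S (n - 1) ω ≤ S N ω :=
              hS_mono (n - 1) N ((Nat.sub_le n 1).trans (Finset.mem_Icc.mp hn).2) ω
            have := hc0 n hn
            nlinarith
        _ = 2 * S N ω * A ω := by rw [hAdef, Finset.mul_sum]
    have step3 : Real.sqrt (∑ n ∈ Finset.Icc 1 N, (μ[φ n|F (n - 1)]) ω ^ 2)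
        ≤ Real.sqrt 2 * ((S N ω + A ω) / 2) := by
      refine (Real.sqrt_le_sqrt h3).trans ?_
      have h1 : 2 * S N ω * A ω = 2 * (S N ω * A ω) := by ring
      rw [h1, Real.sqrt_mul (by norm_num : (0:ℝ) ≤ 2)]
      have h2 : Real.sqrt (S N ω * A ω) ≤ (S N ω + A ω) / 2 := by
        have hup : S N ω * A ω ≤ ((S N ω + A ω) / 2) ^ 2 := by nlinarith [sq_nonneg (S N ω - A ω)]
        have := Real.sqrt_le_sqrt hup
        rwa [Real.sqrt_sq (by positivity)] at this
      exact mul_le_mul_of_nonneg_left h2 (Real.sqrt_nonneg 2)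
    linarith
  -- integrability of both sides
  have hintLHS : Integrable (fun ω => Real.sqrt (∑ n ∈ Finset.Icc 1 N, (μ[ξ n|F (n - 1)]) ω ^ 2)) μ := by
    have hsm : StronglyMeasurable[m0] (fun ω => ∑ n ∈ Finset.Icc 1 N, (μ[ξ n|F (n - 1)]) ω ^ 2) := by
      apply Finset.stronglyMeasurable_fun_sum
      intro n _
      have h := stronglyMeasurable_condExp (m := F (n - 1)) (f := ξ n) (μ := μ) |>.mono (hle (n - 1))
      exact h.pow 2
    apply Integrable.mono' (integrable_finset_sum _ fun n (_ : n ∈ Finset.Icc 1 N) =>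
      (integrable_condExp (f := ξ n) (m := F (n - 1))).abs)
    · exact (Real.continuous_sqrt.comp_stronglyMeasurable hsm).aestronglyMeasurable
    · apply Filter.Eventually.of_forall
      intro ω
      rw [Real.norm_eq_abs, abs_of_nonneg (Real.sqrt_nonneg _)]
      exact LY_sqrt_sum_sq_le_sum_abs _ _
  have hintRHS : Integrable (fun ω => A ω + Real.sqrt 2 * ((S N ω + A ω) / 2)) μ := by
    apply Integrable.add hint_A
    have h := (((hint_S N le_rfl).add hint_A).const_mul (Real.sqrt 2 / 2))
    apply h.congr
    apply Filter.Eventually.of_forall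
    intro ω
    simp only [Pi.add_apply]
    ring
  have hI1 : ∫ ω, Real.sqrt (∑ n ∈ Finset.Icc 1 N, (μ[ξ n|F (n - 1)]) ω ^ 2) ∂μ
      ≤ ∫ ω, (A ω + Real.sqrt 2 * ((S N ω + A ω) / 2)) ∂μ :=
    integral_mono_ae hintLHS hintRHS hmaster
  -- value of ∫ A
  have hIA : ∫ ω, A ω ∂μ = ∫ ω, S N ω ∂μ := by
    have h1 : ∫ ω, A ω ∂μ = ∑ n ∈ Finset.Icc 1 N, ∫ ω, c n ω ∂μ := by
      rw [hAdef]
      exact integral_finset_sum _ fun n _ => hint_c n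
    have hterm : ∀ n ∈ Finset.Icc 1 N,
        ∫ ω, c n ω ∂μ = (∫ ω, S n ω ∂μ) - ∫ ω, S (n - 1) ω ∂μ := by
      intro n hn
      have hn' := Finset.mem_Icc.mp hn
      haveI : SigmaFinite (μ.trim (hle (n - 1))) := inferInstance
      rw [hcdef]
      rw [integral_condExp (hle (n - 1))]
      exact integral_sub (hint_S n hn'.2) (hint_S (n - 1) ((Nat.sub_le n 1).trans hn'.2))
    rw [h1, Finset.sum_congr rfl hterm]
    have htel : ∀ M : ℕ, ∑ n ∈ Finset.Icc 1 M, ((∫ ω, S n ω ∂μ) - ∫ ω, S (n - 1) ω ∂μ)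
        = (∫ ω, S M ω ∂μ) - ∫ ω, S 0 ω ∂μ := by
      intro M
      induction M with
      | zero => simp
      | succ m ih =>
        rw [Finset.sum_Icc_succ_top (Nat.one_le_iff_ne_zero.mpr (Nat.succ_ne_zero m)), ih]
        simp only [Nat.add_sub_cancel]
        ring
    rw [htel N]
    have hS0 : ∀ ω, S 0 ω = 0 := by
      intro ω
      rw [hSdef]
      simp
    have : ∫ ω, S 0 ω ∂μ = 0 := by
      simp only [hS0]
      exact integral_zero _ _
    rw [this, sub_zero]
  -- final computation
  have hIsplit : ∫ ω, (A ω + Real.sqrt 2 * ((S N ω + A ω) / 2)) ∂μ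
      = (∫ ω, A ω ∂μ) + Real.sqrt 2 * (((∫ ω, S N ω ∂μ) + ∫ ω, A ω ∂μ) / 2) := by
    rw [integral_add hint_A (by
      have h := (((hint_S N le_rfl).add hint_A).const_mul (Real.sqrt 2 / 2))
      apply h.congr
      apply Filter.Eventually.of_forall
      intro ω
      simp only [Pi.add_apply]
      ring)]
    congr 1
    rw [integral_const_mul, integral_div, integral_add (hint_S N le_rfl) hint_A]
  have hSint_nonneg : 0 ≤ ∫ ω, S N ω ∂μ := integral_nonneg fun ω => hS_nonneg N ω
  have hsqrt2 : (1:ℝ) ≤ Real.sqrt 2 := by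
    nlinarith [Real.sq_sqrt (show (0:ℝ) ≤ 2 by norm_num), Real.sqrt_nonneg 2]
  have hgoal_eq : ∫ ω, Real.sqrt (∑ n ∈ Finset.Icc 1 N, ξ n ω ^ 2) ∂μ = ∫ ω, S N ω ∂μ := by
    rw [hSdef]
  rw [hgoal_eq]
  have := hI1
  rw [hIsplit, hIA] at this
  nlinarith [this, hSint_nonneg, hsqrt2]
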